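/- If Φ(z) = c₀ + c₁z + c₂z² + ⋯ is analytic on the open unit disk 𝔻 with |Φ(z)| ≤ 1 for all z ∈ 𝔻, then |cₙ| ≤ 1 - |c₀|² for every n ≥ 1. -/

import Mathlib

open Complex Metric
open intervalIntegral Real

theorem intExpAux (j : ℤ) : (∫ θ : ℝ in (0:ℝ)..(2*π), Complex.exp (j * θ * I)) =
    if j = 0 then (2*π : ℂ) else 0 := by
  rcases eq_or_ne j 0 with h | h
  · simp [h]
  · have hc : (j : ℂ) * I ≠ 0 := by simp [h, Complex.I_ne_zero]
    rw [if_neg h]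
    have : ∀ θ : ℝ, (j : ℂ) * θ * I = (j * I) * θ := by intro θ; ring
    simp_rw [this]
    rw [integral_exp_mul_complex hc]
    have h1 : Complex.exp ((j:ℂ) * I * (2*π:ℝ)) = 1 := by
      rw [← Complex.exp_int_mul_two_pi_mul_I j]; congr 1; push_cast; ring
    rw [h1]; simp

theorem normExpAux' (m : ℤ) (θ : ℝ) : ‖Complex.exp (m * θ * I)‖ = 1 := by
  rw [Complex.norm_exp]
  simp

theorem normTermAux (c : ℕ → ℂ) (r : ℝ) (hr0 : 0 ≤ r) (k : ℕ) (θ : ℝ) :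
    ‖c k * r^k * Complex.exp (k * θ * I)‖ = ‖c k‖ * r^k := by
  have h : ((k:ℂ)) * θ * I = ((k:ℤ):ℂ) * θ * I := by push_cast; ring
  rw [norm_mul, norm_mul, h, normExpAux', mul_one, norm_pow, Complex.norm_real,
    Real.norm_of_nonneg hr0]

theorem swapAux (c : ℕ → ℂ) (r : ℝ) (hr0 : 0 ≤ r)
    (hsum : Summable fun k => ‖c k‖ * r ^ k) (m : ℤ) :
    HasSum (fun k : ℕ => c k * r^k * (if (k:ℤ) + m = 0 then (2*π:ℂ) else 0))
      (∫ θ in (0:ℝ)..(2*π),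
        (∑' k:ℕ, c k * r^k * Complex.exp (k * θ * I)) * Complex.exp (m * θ * I)) := by
  have hS : ∀ θ : ℝ, Summable (fun k : ℕ => c k * r^k * Complex.exp (k * θ * I)) := by
    intro θ
    refine Summable.of_norm ?_
    simpa only [normTermAux c r hr0] using hsum
  have H := intervalIntegral.hasSum_integral_of_dominated_convergence
    (μ := MeasureTheory.volume) (a := (0:ℝ)) (b := 2*π)
    (F := fun (k : ℕ) (θ : ℝ) => (c k * r^k * Complex.exp (k * θ * I)) * Complex.exp (m * θ * I))
    (f := fun θ : ℝ => (∑' k:ℕ, c k * r^k * Complex.exp (k * θ * I)) * Complex.exp (m * θ * I))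
    (bound := fun (k : ℕ) (_ : ℝ) => ‖c k‖ * r^k)
    (fun k => by
      apply Continuous.aestronglyMeasurable
      fun_prop)
    (fun k => by
      filter_upwards with θ _
      rw [norm_mul, normTermAux c r hr0, normExpAux', mul_one])
    (by filter_upwards with θ _; exact hsum)
    (by exact intervalIntegrable_const)
    (by
      filter_upwards with θ _
      exact ((hS θ).hasSum).mul_right _)
  have heq : ∀ k : ℕ, (∫ θ in (0:ℝ)..(2*π),
      (c k * r^k * Complex.exp (k * θ * I)) * Complex.exp (m * θ * I))
      = c k * r^k * (if (k:ℤ) + m = 0 then (2*π:ℂ) else 0) := by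
    intro k
    have harg : ∀ θ : ℝ, (c k * r^k * Complex.exp (k * θ * I)) * Complex.exp (m * θ * I)
        = (c k * r^k) * Complex.exp ((((k:ℤ) + m : ℤ) : ℂ) * θ * I) := by
      intro θ
      rw [mul_assoc, ← Complex.exp_add]
      congr 2
      push_cast; ring
    simp_rw [harg]
    rw [intervalIntegral.integral_const_mul, intExpAux]
  rw [show (fun k : ℕ => ∫ θ in (0:ℝ)..(2*π),
      (c k * r^k * Complex.exp (k * θ * I)) * Complex.exp (m * θ * I))
      = fun k : ℕ => c k * r^k * (if (k:ℤ) + m = 0 then (2*π:ℂ) else 0) from funext heq] at H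
  exact H
noncomputable def Eθ (m : ℤ) (θ : ℝ) : ℂ := Complex.exp (m * θ * I)

noncomputable def gfun (c : ℕ → ℂ) (r : ℝ) (θ : ℝ) : ℂ :=
  ∑' k : ℕ, c k * r^k * Complex.exp (k * θ * I)

theorem Eθ_cont (m : ℤ) : Continuous (Eθ m) := by unfold Eθ; fun_prop

theorem Eθ_norm (m : ℤ) (θ : ℝ) : ‖Eθ m θ‖ = 1 := by
  rw [Eθ, Complex.norm_exp]; simp

theorem Eθ_nsq (m : ℤ) (θ : ℝ) : Complex.normSq (Eθ m θ) = 1 := by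
  have := Eθ_norm m θ
  rw [Complex.normSq_eq_norm_sq, this, one_pow]

theorem Eθ_add (a b : ℤ) (θ : ℝ) : Eθ a θ * Eθ b θ = Eθ (a + b) θ := by
  rw [Eθ, Eθ, Eθ, ← Complex.exp_add]; congr 1; push_cast; ring

theorem Eθ_zero (θ : ℝ) : Eθ 0 θ = 1 := by simp [Eθ]

theorem Eθ_conj (m : ℤ) (θ : ℝ) : (starRingEnd ℂ) (Eθ m θ) = Eθ (-m) θ := by
  rw [Eθ, Eθ, ← Complex.exp_conj]; congr 1
  simp [Complex.conj_I]

theorem Eθ_int (m : ℤ) (hm : m ≠ 0) : (∫ θ in (0:ℝ)..(2*π), Eθ m θ) = 0 := by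
  rw [show (fun θ : ℝ => Eθ m θ) = fun θ : ℝ => Complex.exp (m * θ * I) from rfl]
  rw [intExpAux, if_neg hm]

theorem gfun_cont (c : ℕ → ℂ) (r : ℝ) (hr0 : 0 ≤ r)
    (hsum : Summable fun k => ‖c k‖ * r ^ k) : Continuous (gfun c r) := by
  apply continuous_tsum (fun k => by fun_prop) hsum
  intro k θ
  exact le_of_eq (normTermAux c r hr0 k θ)

theorem re_int (h : ℝ → ℂ) (hc : Continuous h) :
    (∫ θ in (0:ℝ)..(2*π), (h θ).re) = (∫ θ in (0:ℝ)..(2*π), h θ).re := by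
  have := Complex.reCLM.intervalIntegral_comp_comm
    (μ := MeasureTheory.volume) (a := (0:ℝ)) (b := 2*π)
    (hc.intervalIntegrable 0 (2*π))
  simpa using this

theorem int_gE (c : ℕ → ℂ) (r : ℝ) (hr0 : 0 ≤ r)
    (hsum : Summable fun k => ‖c k‖ * r ^ k) (m : ℤ) :
    HasSum (fun k : ℕ => c k * r^k * (if (k:ℤ) + m = 0 then (2*π:ℂ) else 0))
      (∫ θ in (0:ℝ)..(2*π), gfun c r θ * Eθ m θ) :=
  swapAux c r hr0 hsum m

theorem int_gn (c : ℕ → ℂ) (r : ℝ) (hr0 : 0 ≤ r)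
    (hsum : Summable fun k => ‖c k‖ * r ^ k) (n : ℕ) :
    (∫ θ in (0:ℝ)..(2*π), gfun c r θ * Eθ (-(n:ℤ)) θ) = ((2*π:ℝ):ℂ) * (c n * r^n) := by
  have h := int_gE c r hr0 hsum (-(n:ℤ))
  have heq : (fun k : ℕ => c k * r^k * (if (k:ℤ) + (-(n:ℤ)) = 0 then (2*π:ℂ) else 0))
      = fun k : ℕ => if k = n then ((2*π:ℝ):ℂ) * (c n * r^n) else 0 := by
    funext k
    rcases eq_or_ne k n with hk | hk
    · subst hk; simp; ring
    · have : (k:ℤ) + (-(n:ℤ)) ≠ 0 := by omega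
      simp [hk, this]
  rw [heq] at h
  exact h.unique (hasSum_ite_eq n _)

theorem int_g0 (c : ℕ → ℂ) (r : ℝ) (hr0 : 0 ≤ r)
    (hsum : Summable fun k => ‖c k‖ * r ^ k) :
    (∫ θ in (0:ℝ)..(2*π), gfun c r θ * Eθ 0 θ) = ((2*π:ℝ):ℂ) * c 0 := by
  have h := int_gn c r hr0 hsum 0
  simpa using h

theorem int_gp (c : ℕ → ℂ) (r : ℝ) (hr0 : 0 ≤ r)
    (hsum : Summable fun k => ‖c k‖ * r ^ k) (n : ℕ) (hn : 1 ≤ n) :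
    (∫ θ in (0:ℝ)..(2*π), gfun c r θ * Eθ (n:ℤ) θ) = 0 := by
  have h := int_gE c r hr0 hsum (n:ℤ)
  have heq : (fun k : ℕ => c k * r^k * (if (k:ℤ) + (n:ℤ) = 0 then (2*π:ℂ) else 0))
      = fun _ : ℕ => (0:ℂ) := by
    funext k
    have : (k:ℤ) + (n:ℤ) ≠ 0 := by omega
    simp [this]
  rw [heq] at h
  exact h.unique hasSum_zero

theorem int_nsq (n : ℤ) (hn : n ≠ 0) (x y : ℂ) :
    (∫ θ in (0:ℝ)..(2*π), Complex.normSq (x + y * Eθ n θ))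
      = 2*π*(Complex.normSq x + Complex.normSq y) := by
  have hpt : ∀ θ : ℝ, Complex.normSq (x + y * Eθ n θ)
      = (Complex.normSq x + Complex.normSq y) + 2 * ((x * (starRingEnd ℂ) y) * Eθ (-n) θ).re := by
    intro θ
    rw [Complex.normSq_add, Complex.normSq_mul, Eθ_nsq, mul_one, map_mul, Eθ_conj, ← mul_assoc]
  simp_rw [hpt]
  have hcont : Continuous fun θ : ℝ => (x * (starRingEnd ℂ) y) * Eθ (-n) θ :=
    continuous_const.mul (Eθ_cont _)
  rw [intervalIntegral.integral_add intervalIntegrable_const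
      (by apply Continuous.intervalIntegrable; unfold Eθ; fun_prop),
    intervalIntegral.integral_const, intervalIntegral.integral_const_mul,
    re_int _ hcont, intervalIntegral.integral_const_mul, Eθ_int (-n) (by omega)]
  simp [smul_eq_mul]

theorem besselAux (c : ℕ → ℂ) (r : ℝ) (hr0 : 0 ≤ r)
    (hsum : Summable fun k => ‖c k‖ * r ^ k)
    (hg1 : ∀ θ : ℝ, ‖gfun c r θ‖ ≤ 1)
    (n : ℕ) (hn : 1 ≤ n) (u v : ℂ) :
    Complex.normSq (u * c 0) + Complex.normSq (u * (c n * r ^ n) + v * c 0)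
      ≤ Complex.normSq u + Complex.normSq v := by
  have hπ : (0:ℝ) < 2*π := by positivity
  have hnz : (n:ℤ) ≠ 0 := by omega
  have cg : Continuous (gfun c r) := gfun_cont c r hr0 hsum
  set g : ℝ → ℂ := gfun c r with hg_def
  set d0 : ℂ := u * c 0 with hd0_def
  set dn : ℂ := u * (c n * r ^ n) + v * c 0 with hdn_def
  set q : ℝ → ℂ := fun θ => g θ * (u + v * Eθ (n:ℤ) θ) with hq_def
  set P : ℝ → ℂ := fun θ => d0 + dn * Eθ (n:ℤ) θ with hP_def
  have cE : ∀ m : ℤ, Continuous (Eθ m) := Eθ_cont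
  have cq : Continuous q := by
    rw [hq_def]; exact cg.mul (continuous_const.add (continuous_const.mul (cE _)))
  have cP : Continuous P := continuous_const.add (continuous_const.mul (cE _))
  -- ∫ q = 2π d0
  have hQ0 : (∫ θ in (0:ℝ)..(2*π), q θ) = ((2*π:ℝ):ℂ) * d0 := by
    have hpt : ∀ θ : ℝ, q θ = u * (g θ * Eθ 0 θ) + v * (g θ * Eθ (n:ℤ) θ) := by
      intro θ; rw [hq_def]; simp only [Eθ_zero, mul_one]; ring
    simp_rw [hpt]
    rw [intervalIntegral.integral_add
        (by exact (continuous_const.mul (cg.mul (cE 0))).intervalIntegrable _ _)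
        (by exact (continuous_const.mul (cg.mul (cE _))).intervalIntegrable _ _),
      intervalIntegral.integral_const_mul, intervalIntegral.integral_const_mul,
      int_g0 c r hr0 hsum, int_gp c r hr0 hsum n hn]
    rw [hd0_def]; ring
  -- ∫ q * E(-n) = 2π dn
  have hQn : (∫ θ in (0:ℝ)..(2*π), q θ * Eθ (-(n:ℤ)) θ) = ((2*π:ℝ):ℂ) * dn := by
    have hpt : ∀ θ : ℝ, q θ * Eθ (-(n:ℤ)) θ
        = u * (g θ * Eθ (-(n:ℤ)) θ) + v * (g θ * Eθ 0 θ) := by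
      intro θ
      have h1 : Eθ (n:ℤ) θ * Eθ (-(n:ℤ)) θ = Eθ 0 θ := by
        rw [Eθ_add]; norm_num
      rw [hq_def]
      simp only
      linear_combination v * g θ * h1
    simp_rw [hpt]
    rw [intervalIntegral.integral_add
        (by exact (continuous_const.mul (cg.mul (cE _))).intervalIntegrable _ _)
        (by exact (continuous_const.mul (cg.mul (cE 0))).intervalIntegrable _ _),
      intervalIntegral.integral_const_mul, intervalIntegral.integral_const_mul,
      int_g0 c r hr0 hsum, int_gn c r hr0 hsum n]
    rw [hdn_def]; ring
  -- cross term
  have hcross : (∫ θ in (0:ℝ)..(2*π), (q θ * (starRingEnd ℂ) (P θ)).re)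
      = 2*π*(Complex.normSq d0 + Complex.normSq dn) := by
    have hpt : ∀ θ : ℝ, q θ * (starRingEnd ℂ) (P θ)
        = (starRingEnd ℂ) d0 * q θ + (starRingEnd ℂ) dn * (q θ * Eθ (-(n:ℤ)) θ) := by
      intro θ
      rw [hP_def]
      simp only [map_add, map_mul, Eθ_conj]
      ring
    simp_rw [hpt]
    have c1 : Continuous fun θ : ℝ => (starRingEnd ℂ) d0 * q θ := continuous_const.mul cq
    have c2 : Continuous fun θ : ℝ => (starRingEnd ℂ) dn * (q θ * Eθ (-(n:ℤ)) θ) :=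
      continuous_const.mul (cq.mul (cE _))
    have c12 : Continuous fun θ : ℝ => (starRingEnd ℂ) d0 * q θ
        + (starRingEnd ℂ) dn * (q θ * Eθ (-(n:ℤ)) θ) := c1.add c2
    rw [re_int _ c12, intervalIntegral.integral_add (c1.intervalIntegrable _ _)
        (c2.intervalIntegrable _ _),
      intervalIntegral.integral_const_mul, intervalIntegral.integral_const_mul,
      hQ0, hQn]
    have : (starRingEnd ℂ) d0 * (((2*π:ℝ):ℂ) * d0) + (starRingEnd ℂ) dn * (((2*π:ℝ):ℂ) * dn)
        = (((2*π) * (Complex.normSq d0 + Complex.normSq dn) : ℝ) : ℂ) := by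
      rw [show (starRingEnd ℂ) d0 * (((2*π:ℝ):ℂ) * d0)
          = ((2*π:ℝ):ℂ) * (d0 * (starRingEnd ℂ) d0) by ring,
        show (starRingEnd ℂ) dn * (((2*π:ℝ):ℂ) * dn)
          = ((2*π:ℝ):ℂ) * (dn * (starRingEnd ℂ) dn) by ring,
        Complex.mul_conj, Complex.mul_conj]
      push_cast; ring
    rw [this, Complex.ofReal_re]
  -- ∫ normSq P
  have hPint : (∫ θ in (0:ℝ)..(2*π), Complex.normSq (P θ))
      = 2*π*(Complex.normSq d0 + Complex.normSq dn) := by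
    rw [hP_def]
    exact int_nsq (n:ℤ) hnz d0 dn
  -- ∫ normSq q ≤ 2π (nsq u + nsq v)
  have hQle : (∫ θ in (0:ℝ)..(2*π), Complex.normSq (q θ))
      ≤ 2*π*(Complex.normSq u + Complex.normSq v) := by
    have hmono : ∀ θ ∈ Set.Icc (0:ℝ) (2*π),
        Complex.normSq (q θ) ≤ Complex.normSq (u + v * Eθ (n:ℤ) θ) := by
      intro θ _
      rw [hq_def]
      simp only
      rw [Complex.normSq_mul]
      have h1 : Complex.normSq (g θ) ≤ 1 := by
        rw [Complex.normSq_eq_norm_sq]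
        exact pow_le_one₀ (norm_nonneg _) (hg1 θ)
      exact mul_le_of_le_one_left (Complex.normSq_nonneg _) h1
    have hint1 : IntervalIntegrable (fun θ => Complex.normSq (q θ))
        MeasureTheory.volume 0 (2*π) :=
      (Complex.continuous_normSq.comp cq).intervalIntegrable _ _
    have hint2 : IntervalIntegrable (fun θ => Complex.normSq (u + v * Eθ (n:ℤ) θ))
        MeasureTheory.volume 0 (2*π) :=
      (Complex.continuous_normSq.comp
        (continuous_const.add (continuous_const.mul (cE _)))).intervalIntegrable _ _
    have := intervalIntegral.integral_mono_on hπ.le hint1 hint2 hmono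
    calc (∫ θ in (0:ℝ)..(2*π), Complex.normSq (q θ))
        ≤ ∫ θ in (0:ℝ)..(2*π), Complex.normSq (u + v * Eθ (n:ℤ) θ) := this
      _ = 2*π*(Complex.normSq u + Complex.normSq v) := int_nsq (n:ℤ) hnz u v
  -- nonnegativity and expansion
  have hnonneg : (0:ℝ) ≤ ∫ θ in (0:ℝ)..(2*π), Complex.normSq (q θ - P θ) :=
    intervalIntegral.integral_nonneg hπ.le (fun θ _ => Complex.normSq_nonneg _)
  have hexpand : (∫ θ in (0:ℝ)..(2*π), Complex.normSq (q θ - P θ))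
      = (∫ θ in (0:ℝ)..(2*π), Complex.normSq (q θ))
        + (∫ θ in (0:ℝ)..(2*π), Complex.normSq (P θ))
        - 2 * (∫ θ in (0:ℝ)..(2*π), (q θ * (starRingEnd ℂ) (P θ)).re) := by
    have hpt : ∀ θ : ℝ, Complex.normSq (q θ - P θ)
        = Complex.normSq (q θ) + Complex.normSq (P θ)
          - 2 * (q θ * (starRingEnd ℂ) (P θ)).re := fun θ => Complex.normSq_sub _ _
    simp_rw [hpt]
    rw [intervalIntegral.integral_sub
        (by exact ((Complex.continuous_normSq.comp cq).add
            (Complex.continuous_normSq.comp cP)).intervalIntegrable _ _)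
        (by apply Continuous.intervalIntegrable; fun_prop),
      intervalIntegral.integral_add
        (by exact (Complex.continuous_normSq.comp cq).intervalIntegrable _ _)
        (by exact (Complex.continuous_normSq.comp cP).intervalIntegrable _ _),
      intervalIntegral.integral_const_mul]
  -- combine
  have key : 2*π*(Complex.normSq d0 + Complex.normSq dn)
      ≤ 2*π*(Complex.normSq u + Complex.normSq v) := by
    rw [hexpand, hcross, hPint] at hnonneg
    linarith
  have := (mul_le_mul_iff_right₀ hπ).mp key
  exact this

theorem nsq_eq_norm_sq (z : ℂ) : Complex.normSq z = ‖z‖^2 := by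
  rw [Complex.normSq_eq_norm_sq]

theorem coeff_bound_of_bounded_analytic
    (Φ : ℂ → ℂ) (c : ℕ → ℂ)
    (hΦ : ∀ z ∈ ball (0 : ℂ) 1, HasSum (fun n : ℕ => c n * z ^ n) (Φ z))
    (hb : ∀ z ∈ ball (0 : ℂ) 1, ‖Φ z‖ ≤ 1) :
    ∀ n : ℕ, 1 ≤ n → ‖c n‖ ≤ 1 - ‖c 0‖ ^ 2 := by
  intro n hn
  -- summability of coefficients against r^k for r < 1
  have hsum : ∀ r : ℝ, 0 ≤ r → r < 1 → Summable fun k => ‖c k‖ * r ^ k := by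
    intro r hr0 hr1
    set ρ : ℝ := (1 + r)/2 with hρ_def
    have hρr : r < ρ := by rw [hρ_def]; linarith
    have hρ1 : ρ < 1 := by rw [hρ_def]; linarith
    have hρ0 : 0 < ρ := by rw [hρ_def]; linarith
    have hmem : ((ρ:ℝ):ℂ) ∈ ball (0:ℂ) 1 := by
      rw [mem_ball_zero_iff, Complex.norm_real, Real.norm_of_nonneg hρ0.le]
      exact hρ1
    have hsum0 : Summable fun k : ℕ => c k * ((ρ:ℝ):ℂ)^k := (hΦ _ hmem).summable
    have htend : Filter.Tendsto (fun k : ℕ => ‖c k * ((ρ:ℝ):ℂ)^k‖)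
        Filter.atTop (nhds 0) := by
      simpa using hsum0.tendsto_atTop_zero.norm
    obtain ⟨C, hC⟩ := htend.bddAbove_range
    have hC' : ∀ k : ℕ, ‖c k‖ * ρ^k ≤ C := by
      intro k
      have := hC (Set.mem_range_self k)
      rwa [norm_mul, norm_pow, Complex.norm_real, Real.norm_of_nonneg hρ0.le] at this
    have hgeo : Summable fun k : ℕ => C * (r/ρ)^k := by
      apply Summable.mul_left
      apply summable_geometric_of_lt_one (by positivity)
      rw [div_lt_one hρ0]
      exact hρr
    apply Summable.of_nonneg_of_le (fun k => by positivity) _ hgeo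
    intro k
    have hkey : ‖c k‖ * r^k = (‖c k‖ * ρ^k) * (r/ρ)^k := by
      rw [mul_assoc, ← mul_pow, mul_div_assoc', mul_div_cancel_left₀ _ hρ0.ne']
    rw [hkey]
    apply mul_le_mul_of_nonneg_right (hC' k) (by positivity)
  -- gfun equals Φ on the circle of radius r
  have hg1 : ∀ r : ℝ, 0 ≤ r → r < 1 → ∀ θ : ℝ, ‖gfun c r θ‖ ≤ 1 := by
    intro r hr0 hr1 θ
    have hmem : ((r:ℝ):ℂ) * Complex.exp (θ * I) ∈ ball (0:ℂ) 1 := by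
      rw [mem_ball_zero_iff, norm_mul, Complex.norm_real, Real.norm_of_nonneg hr0,
        Complex.norm_exp]
      simp [hr1]
    have h := hΦ _ hmem
    have hfe : (fun k : ℕ => c k * (((r:ℝ):ℂ) * Complex.exp (θ * I))^k)
        = fun k : ℕ => c k * r^k * Complex.exp (k * θ * I) := by
      funext k
      rw [mul_pow, ← Complex.exp_nat_mul,
        show ((k:ℕ):ℂ) * ((θ:ℝ) * I) = ((k:ℕ):ℂ) * θ * I from by ring]
      ring
    rw [hfe] at h
    have : gfun c r θ = Φ (((r:ℝ):ℂ) * Complex.exp (θ * I)) := h.tsum_eq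
    rw [this]
    exact hb _ hmem
  -- per-radius bound
  have hr_bound : ∀ r : ℝ, 0 ≤ r → r < 1 → ‖c n‖ * r^n ≤ 1 - ‖c 0‖^2 := by
    intro r hr0 hr1
    have hBgen := besselAux c r hr0 (hsum r hr0 hr1) (hg1 r hr0 hr1) n hn
    have hxnn : (0:ℝ) ≤ ‖c n‖ * r^n := by positivity
    have hxnorm : ‖c n * ((r:ℝ):ℂ)^n‖ = ‖c n‖ * r^n := by
      rw [norm_mul, norm_pow, Complex.norm_real, Real.norm_of_nonneg hr0]
    -- Bessel with u = 1, v = 0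
    have hB0 := hBgen 1 0
    rw [nsq_eq_norm_sq, nsq_eq_norm_sq, nsq_eq_norm_sq, nsq_eq_norm_sq] at hB0
    simp only [one_mul, zero_mul, add_zero, norm_one, norm_zero] at hB0
    rw [hxnorm] at hB0
    -- hB0 : ‖c 0‖^2 + (‖c n‖ * r^n)^2 ≤ 1^2 + 0^2
    by_cases ha1 : ‖c 0‖ < 1
    · set s : ℝ := (1 - ‖c 0‖^2)⁻¹ with hs_def
      have ha2 : ‖c 0‖^2 < 1 := by nlinarith [norm_nonneg (c 0)]
      have h12 : (1:ℝ) - ‖c 0‖^2 ≠ 0 := by nlinarith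
      have hspos : 0 < s := by rw [hs_def]; exact inv_pos.mpr (by nlinarith)
      have hs1 : s * (1 - ‖c 0‖^2) = 1 := by
        rw [hs_def]; exact inv_mul_cancel₀ h12
      have hB := hBgen 1 ((starRingEnd ℂ) (c 0) * (c n * ((r:ℝ):ℂ)^n) * ((s:ℝ):ℂ))
      have hcc : (c 0) * (starRingEnd ℂ) (c 0) = ((‖c 0‖^2 : ℝ) : ℂ) := by
        rw [Complex.mul_conj, nsq_eq_norm_sq]
      have hkey : (1:ℂ) * (c n * ((r:ℝ):ℂ)^n)
          + ((starRingEnd ℂ) (c 0) * (c n * ((r:ℝ):ℂ)^n) * ((s:ℝ):ℂ)) * c 0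
          = (c n * ((r:ℝ):ℂ)^n) * ((s:ℝ):ℂ) := by
        have hrs : (1:ℂ) + ((s:ℝ):ℂ) * ((‖c 0‖^2:ℝ):ℂ) = ((s:ℝ):ℂ) := by
          have h' : (1:ℝ) + s * ‖c 0‖^2 = s := by nlinarith
          rw [← Complex.ofReal_mul, ← Complex.ofReal_one, ← Complex.ofReal_add, h']
        calc (1:ℂ) * (c n * ((r:ℝ):ℂ)^n)
            + ((starRingEnd ℂ) (c 0) * (c n * ((r:ℝ):ℂ)^n) * ((s:ℝ):ℂ)) * c 0
            = (c n * ((r:ℝ):ℂ)^n) * ((1:ℂ) + ((s:ℝ):ℂ) * (c 0 * (starRingEnd ℂ) (c 0))) := by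
              ring
          _ = (c n * ((r:ℝ):ℂ)^n) * ((s:ℝ):ℂ) := by rw [hcc, hrs]
      rw [one_mul, hkey] at hB
      rw [nsq_eq_norm_sq, nsq_eq_norm_sq, nsq_eq_norm_sq, nsq_eq_norm_sq] at hB
      rw [norm_mul, hxnorm, Complex.norm_real, Real.norm_of_nonneg hspos.le,
        norm_one, norm_mul, norm_mul, Complex.norm_real,
        Real.norm_of_nonneg hspos.le, RCLike.norm_conj, hxnorm] at hB
      -- hB : ‖c 0‖^2 + (x*s)^2 ≤ 1^2 + (‖c 0‖*x*s)^2
      have hxs : (‖c n‖ * r^n)^2 * s^2 ≤ 1 := by nlinarith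
      have hxs1 : (‖c n‖ * r^n) * s ≤ 1 := by
        nlinarith [mul_nonneg hxnn hspos.le]
      calc ‖c n‖ * r^n = ((‖c n‖ * r^n) * s) * (1 - ‖c 0‖^2) := by
            rw [mul_assoc, hs_def, inv_mul_cancel₀ h12, mul_one]
        _ ≤ 1 * (1 - ‖c 0‖^2) := mul_le_mul_of_nonneg_right hxs1 (by nlinarith)
        _ = 1 - ‖c 0‖^2 := one_mul _
    · push_neg at ha1
      have hx0 : ‖c n‖ * r^n = 0 := by nlinarith
      rw [hx0]
      nlinarith
  -- limit r → 1⁻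
  have htends : Filter.Tendsto (fun r : ℝ => ‖c n‖ * r^n)
      (nhdsWithin 1 (Set.Iio 1)) (nhds (‖c n‖)) := by
    have hcont : Continuous fun r : ℝ => ‖c n‖ * r^n := by fun_prop
    have h2 : Filter.Tendsto (fun r : ℝ => ‖c n‖ * r^n)
        (nhdsWithin 1 (Set.Iio 1)) (nhds (‖c n‖ * 1^n)) :=
      (hcont.tendsto 1).mono_left nhdsWithin_le_nhds
    simpa using h2
  refine le_of_tendsto htends ?_
  filter_upwards [Ioo_mem_nhdsLT_of_mem (by constructor <;> norm_num : (1:ℝ) ∈ Set.Ioc 0 1)]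
    with r hr
  exact hr_bound r hr.1.le hr.2
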